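/- (Proposition 1) Let N ≥ 2 and let Q be an N×N real symmetric positive semidefinite matrix with all row sums zero and all diagonal entries equal to 1/N². Then the largest eigenvalue of Q satisfies λ_max(Q) ≥ 1/(N(N−1)), with equality if and only if Q = Q_strict := (1/(N(N−1))) ( I_N − (1/N) J_N ), where I_N is the N×N identity matrix and J_N is the N×N all-ones matrix. -/

import Mathlib

open Finset

/-- The matrix `Q_strict = (1/(N(N−1)))(I_N − (1/N)J_N)`, where `J_N` is the
all-ones matrix. -/
noncomputable def Qstrict (N : ℕ) : Matrix (Fin N) (Fin N) ℝ :=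
  (1 / ((N : ℝ) * ((N : ℝ) - 1))) •
    ((1 : Matrix (Fin N) (Fin N) ℝ) - (N : ℝ)⁻¹ • Matrix.of (fun _ _ => (1 : ℝ)))

namespace Prop1Aux
variable {N : ℕ}

def qf (A : Matrix (Fin N) (Fin N) ℝ) (v : Fin N → ℝ) : ℝ :=
  ∑ i, ∑ j, A i j * v i * v j

lemma qf_smul_vec (A : Matrix (Fin N) (Fin N) ℝ) (s : ℝ) (v : Fin N → ℝ) :
    qf A (fun i => s * v i) = s ^ 2 * qf A v := by
  simp only [qf, Finset.mul_sum]
  exact Finset.sum_congr rfl fun i _ => Finset.sum_congr rfl fun j _ => by ring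

lemma qf_sub (A B : Matrix (Fin N) (Fin N) ℝ) (v : Fin N → ℝ) :
    qf (A - B) v = qf A v - qf B v := by
  simp [qf, sub_mul, Finset.sum_sub_distrib]

lemma sum_ind (f : Fin N → ℝ) (i j : Fin N) (a b : ℝ) :
    ∑ k, f k * (a * (if k = i then (1:ℝ) else 0) + b * (if k = j then 1 else 0))
      = a * f i + b * f j := by
  simp [mul_add, Finset.sum_add_distrib, mul_ite, mul_comm, Finset.sum_ite_eq']

lemma qf_two (A : Matrix (Fin N) (Fin N) ℝ) (i j : Fin N) (a b : ℝ) :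
    qf A (fun k => a * (if k = i then (1:ℝ) else 0) + b * (if k = j then 1 else 0))
      = a^2 * A i i + a*b * A i j + a*b * A j i + b^2 * A j j := by
  have h2 : ∀ k : Fin N, ∑ l, A k l *
      (a * (if k = i then (1:ℝ) else 0) + b * (if k = j then 1 else 0)) *
      (a * (if l = i then (1:ℝ) else 0) + b * (if l = j then 1 else 0))
      = (a * (if k = i then (1:ℝ) else 0) + b * (if k = j then 1 else 0)) *
        (a * A k i + b * A k j) := by
    intro k
    rw [← sum_ind (fun l => A k l) i j a b, Finset.mul_sum]
    exact Finset.sum_congr rfl fun l _ => by ring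
  simp only [qf, h2]
  have h3 : ∑ k, (a * (if k = i then (1:ℝ) else 0) + b * (if k = j then 1 else 0)) *
      (a * A k i + b * A k j)
      = a * (a * A i i + b * A i j) + b * (a * A j i + b * A j j) := by
    rw [← sum_ind (fun k => a * A k i + b * A k j) i j a b]
    exact Finset.sum_congr rfl fun k _ => by ring
  rw [h3]; ring

lemma qf_shift (A : Matrix (Fin N) (Fin N) ℝ) (hrow : ∀ i, ∑ j, A i j = 0)
    (hcol : ∀ j, ∑ i, A i j = 0) (v : Fin N → ℝ) (m : ℝ) :
    qf A (fun i => v i - m) = qf A v := by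
  have hS : ∑ k : Fin N, ∑ l, A k l * v l = 0 := by
    rw [Finset.sum_comm]
    refine Finset.sum_eq_zero fun l _ => ?_
    rw [← Finset.sum_mul, hcol l, zero_mul]
  have h1 : ∀ k : Fin N, ∑ l, A k l * (v k - m) * (v l - m)
      = (v k - m) * (∑ l, A k l * v l) := by
    intro k
    have h : ∑ l, A k l * (v k - m) * (v l - m)
        = ∑ l, ((v k - m) * (A k l * v l) - ((v k - m) * m) * A k l) :=
      Finset.sum_congr rfl fun l _ => by ring
    rw [h, Finset.sum_sub_distrib, ← Finset.mul_sum, ← Finset.mul_sum, hrow k,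
      mul_zero, sub_zero]
  have h2 : ∀ k : Fin N, ∑ l, A k l * v k * v l = v k * ∑ l, A k l * v l := by
    intro k
    rw [Finset.mul_sum]
    exact Finset.sum_congr rfl fun l _ => by ring
  simp only [qf, h1, h2, sub_mul, Finset.sum_sub_distrib, ← Finset.mul_sum, hS,
    mul_zero, sub_zero]

lemma Qstrict_apply (i j : Fin N) :
    Qstrict N i j = (1 / ((N : ℝ) * ((N : ℝ) - 1))) *
      ((if i = j then (1:ℝ) else 0) - (N : ℝ)⁻¹) := by
  simp [Qstrict, Matrix.one_apply, Matrix.smul_apply, Matrix.sub_apply]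

lemma qf_Qstrict (v : Fin N → ℝ) :
    qf (Qstrict N) v = (1 / ((N : ℝ) * ((N : ℝ) - 1))) *
      (∑ i, v i ^ 2 - (∑ i, v i) ^ 2 / N) := by
  set c : ℝ := 1 / ((N : ℝ) * ((N : ℝ) - 1)) with hc
  have inner : ∀ i : Fin N, ∑ j, Qstrict N i j * v i * v j
      = c * v i ^ 2 - c * (N:ℝ)⁻¹ * v i * ∑ j, v j := by
    intro i
    have h : ∀ j : Fin N, Qstrict N i j * v i * v j
        = (if i = j then c * v i * v j else 0) - c * (N:ℝ)⁻¹ * v i * v j := by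
      intro j
      rw [Qstrict_apply]
      split_ifs <;> ring
    simp only [h, Finset.sum_sub_distrib, Finset.sum_ite_eq, Finset.mem_univ, if_true]
    rw [← Finset.mul_sum]
    ring
  simp only [qf, inner, Finset.sum_sub_distrib, ← Finset.mul_sum, ← Finset.sum_mul]
  ring

end Prop1Aux

/-- Proposition 1: for any `N×N` real symmetric positive semidefinite matrix
`Q` with all row sums zero and all diagonal entries `1/N²`, the largest
eigenvalue `λ_max(Q)` (the maximum of `τ′Qτ` over unit vectors `τ`) satisfies
`λ_max(Q) ≥ 1/(N(N−1))`, with equality if and only if `Q = Q_strict`. -/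
theorem proposition1 {N : ℕ} (hN : 2 ≤ N)
    (Q : Matrix (Fin N) (Fin N) ℝ) (hQ : Q.PosSemidef)
    (hrow : ∀ i, ∑ j, Q i j = 0) (hdiag : ∀ i, Q i i = 1 / (N : ℝ) ^ 2)
    (lamMax : ℝ)
    (hlam : IsGreatest
      {r : ℝ | ∃ τ : Fin N → ℝ, ∑ i, (τ i) ^ 2 = 1 ∧
        r = ∑ i, ∑ j, Q i j * τ i * τ j} lamMax) :
    1 / ((N : ℝ) * ((N : ℝ) - 1)) ≤ lamMax ∧
      (lamMax = 1 / ((N : ℝ) * ((N : ℝ) - 1)) ↔ Q = Qstrict N) := by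
  classical
  open Prop1Aux in
  have hNR : (2:ℝ) ≤ (N:ℝ) := by exact_mod_cast hN
  have hN0 : (0:ℝ) < N := by linarith
  have hN0' : (N:ℝ) ≠ 0 := ne_of_gt hN0
  have hN1 : (0:ℝ) < (N:ℝ) - 1 := by linarith
  have hN1' : (N:ℝ) - 1 ≠ 0 := ne_of_gt hN1
  set c : ℝ := 1 / ((N : ℝ) * ((N : ℝ) - 1)) with hc
  have hcpos : 0 < c := by positivity
  -- symmetry and column sums
  have hsym : ∀ i j, Q i j = Q j i := by
    intro i j
    have := congrFun (congrFun hQ.1 i) j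
    simpa [Matrix.conjTranspose_apply] using this.symm
  have hcol : ∀ j, ∑ i, Q i j = 0 := by
    intro j
    calc ∑ i, Q i j = ∑ i, Q j i := Finset.sum_congr rfl fun i _ => hsym i j
    _ = 0 := hrow j
  -- the witness vector
  have i0 : Fin N := ⟨0, by omega⟩
  have hqsingle : Prop1Aux.qf Q (fun k => if k = i0 then (1:ℝ) else 0) = Q i0 i0 := by
    have h := Prop1Aux.qf_two Q i0 i0 1 0
    simpa using h
  have hqw : Prop1Aux.qf Q (fun k => (if k = i0 then (1:ℝ) else 0) - 1/N) = 1/(N:ℝ)^2 := by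
    have h := Prop1Aux.qf_shift Q hrow hcol (fun k => if k = i0 then (1:ℝ) else 0) (1/N)
    rw [h, hqsingle, hdiag]
  have hw2 : ∑ k : Fin N, ((if k = i0 then (1:ℝ) else 0) - 1/N) ^ 2 = ((N:ℝ)-1)/N := by
    have hptw : ∀ k : Fin N, ((if k = i0 then (1:ℝ) else 0) - 1/N) ^ 2
        = 1/(N:ℝ)^2 + (if k = i0 then 1 - 2/(N:ℝ) else 0) := by
      intro k; split_ifs <;> ring
    simp only [hptw, Finset.sum_add_distrib, Finset.sum_const, Finset.card_univ,
      Fintype.card_fin, nsmul_eq_mul, Finset.sum_ite_eq, Finset.sum_ite_eq', Finset.mem_univ, if_true]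
    field_simp
    ring
  set s : ℝ := Real.sqrt ((N:ℝ)/((N:ℝ)-1)) with hs
  have hs2 : s ^ 2 = (N:ℝ)/((N:ℝ)-1) := Real.sq_sqrt (by positivity)
  set τ0 : Fin N → ℝ := fun k => s * ((if k = i0 then (1:ℝ) else 0) - 1/N) with hτ0
  have hτ0norm : ∑ k, τ0 k ^ 2 = 1 := by
    simp only [hτ0, mul_pow, ← Finset.mul_sum, hw2, hs2]
    field_simp
  have hτ0qf : Prop1Aux.qf Q τ0 = c := by
    rw [hτ0, Prop1Aux.qf_smul_vec, hqw, hs2, hc]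
    field_simp
  have hmem : c ∈ {r : ℝ | ∃ τ : Fin N → ℝ, ∑ i, (τ i) ^ 2 = 1 ∧
      r = ∑ i, ∑ j, Q i j * τ i * τ j} := ⟨τ0, hτ0norm, hτ0qf.symm⟩
  have part1 : c ≤ lamMax := hlam.2 hmem
  refine ⟨part1, ?_, ?_⟩
  · -- lamMax = c → Q = Qstrict
    intro h
    have hub : ∀ v : Fin N → ℝ, Prop1Aux.qf Q v ≤ c * ∑ i, v i ^ 2 := by
      intro v
      by_cases h0 : ∑ i, v i ^ 2 = 0
      · have hv : ∀ i, v i = 0 := by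
          intro i
          have h1 := (Finset.sum_eq_zero_iff_of_nonneg
            (fun i _ => sq_nonneg (v i))).mp h0 i (Finset.mem_univ i)
          exact pow_eq_zero_iff two_ne_zero |>.mp h1
        simp [Prop1Aux.qf, hv, h0]
      · have hpos : 0 < ∑ i, v i ^ 2 :=
          lt_of_le_of_ne (Finset.sum_nonneg fun i _ => sq_nonneg (v i)) (Ne.symm h0)
        set t : ℝ := Real.sqrt (∑ i, v i ^ 2) with ht
        have ht2 : t ^ 2 = ∑ i, v i ^ 2 := Real.sq_sqrt (le_of_lt hpos)
        have htpos : 0 < t := Real.sqrt_pos.mpr hpos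
        have hτn : ∑ i, ((1/t) * v i) ^ 2 = 1 := by
          simp only [mul_pow, ← Finset.mul_sum, ← ht2]
          field_simp
        have hmem2 : Prop1Aux.qf Q (fun i => (1/t) * v i) ≤ lamMax :=
          hlam.2 ⟨fun i => (1/t) * v i, hτn, rfl⟩
        rw [Prop1Aux.qf_smul_vec] at hmem2
        have h3 : Prop1Aux.qf Q v ≤ lamMax * t ^ 2 := by
          have ht2pos : 0 < t ^ 2 := by positivity
          rw [div_pow, one_pow] at hmem2
          calc Prop1Aux.qf Q v = (1 / t ^ 2 * Prop1Aux.qf Q v) * t ^ 2 := by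
                field_simp
          _ ≤ lamMax * t ^ 2 := by
                apply mul_le_mul_of_nonneg_right _ (le_of_lt ht2pos)
                simpa [div_eq_mul_inv, mul_comm] using hmem2
        rw [ht2, h] at h3
        exact h3
    have key2 : ∀ v : Fin N → ℝ,
        Prop1Aux.qf Q v ≤ c * (∑ i, v i ^ 2 - (∑ i, v i) ^ 2 / N) := by
      intro v
      set m : ℝ := (∑ i, v i) / N with hm
      have hshift := Prop1Aux.qf_shift Q hrow hcol v m
      have hb := hub (fun i => v i - m)
      have hsum : ∑ i, (v i - m) ^ 2 = ∑ i, v i ^ 2 - (∑ i, v i) ^ 2 / N := by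
        have hexp : ∀ i, (v i - m) ^ 2 = v i ^ 2 - (2*m) * v i + m ^ 2 :=
          fun i => by ring
        simp only [hexp, Finset.sum_add_distrib, Finset.sum_sub_distrib,
          Finset.sum_const, Finset.card_univ, Fintype.card_fin, nsmul_eq_mul,
          ← Finset.mul_sum]
        rw [hm]
        field_simp
        ring
      rw [hshift, hsum] at hb
      exact hb
    have hR : ∀ v : Fin N → ℝ, 0 ≤ Prop1Aux.qf (Qstrict N - Q) v := by
      intro v
      rw [Prop1Aux.qf_sub, Prop1Aux.qf_Qstrict]
      have := key2 v
      rw [← hc]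
      linarith
    have hdiagR : ∀ i, (Qstrict N - Q) i i = 0 := by
      intro i
      rw [Matrix.sub_apply, Prop1Aux.Qstrict_apply, hdiag, if_pos rfl, ← hc]
      rw [hc]
      field_simp
      ring
    have hsymR : ∀ i j, (Qstrict N - Q) i j = (Qstrict N - Q) j i := by
      intro i j
      simp only [Matrix.sub_apply, Prop1Aux.Qstrict_apply, hsym i j, eq_comm]
    have hentry : ∀ i j, (Qstrict N - Q) i j = 0 := by
      intro i j
      set R := Qstrict N - Q with hRdef
      have h1 := hR (fun k => 1 * (if k = i then (1:ℝ) else 0)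
        + 1 * (if k = j then 1 else 0))
      have h2 := hR (fun k => 1 * (if k = i then (1:ℝ) else 0)
        + (-1) * (if k = j then 1 else 0))
      rw [Prop1Aux.qf_two] at h1 h2
      have hii := hdiagR i
      have hjj := hdiagR j
      have hij := hsymR i j
      linarith
    ext i j
    have := hentry i j
    rw [Matrix.sub_apply] at this
    linarith
  · -- Q = Qstrict → lamMax = c
    intro h
    subst h
    obtain ⟨τ, hτn, hτval⟩ := hlam.1
    have hval : lamMax = Prop1Aux.qf (Qstrict N) τ := hτval
    rw [Prop1Aux.qf_Qstrict, hτn, ← hc] at hval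
    have hnn : 0 ≤ c * ((∑ i, τ i) ^ 2 / N) := by positivity
    have : lamMax ≤ c := by rw [hval]; nlinarith
    linarith
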